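/- Let F : ℝ³ → ℝ³ be the vector field with components F_i(x) = x_i(1 − x_i)(1 − 2x_j)(1 − 2x_k) for {i,j,k} = {1,2,3}, and let φ : ℝ × [0,1]³ → [0,1]³ be a flow of F (φ(0,x) = x, φ(s+t,x) = φ(s,φ(t,x)), and t ↦ φ(t,x) is differentiable with derivative F(φ(t,x))). Then every attracting set of φ that contains the point (0,0,0) also contains the points (1/2,1/2,1/2) and (1,1,1). -/

import Mathlib

open Filter Set

/-- The cube `[0,1]³`. -/
def cube : Set (Fin 3 → ℝ) := Set.Icc 0 1

/-- The ω-limit set of `z` under the flow `φ`. -/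
def omegaLimit3 (φ : ℝ → (Fin 3 → ℝ) → (Fin 3 → ℝ)) (z : Fin 3 → ℝ) : Set (Fin 3 → ℝ) :=
  {y | ∃ t : ℕ → ℝ, Tendsto t atTop atTop ∧ Tendsto (fun n => φ (t n) z) atTop (nhds y)}

/-- `A` is an attracting set of the flow `φ` on `[0,1]³`: compact, invariant, and
possessing a strictly larger forward-invariant open neighborhood (open in `[0,1]³`)
all of whose points have ω-limit sets inside `A`. -/
def AttractingSet3 (φ : ℝ → (Fin 3 → ℝ) → (Fin 3 → ℝ)) (A : Set (Fin 3 → ℝ)) : Prop :=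
  A ⊆ cube ∧ IsCompact A ∧ (∀ t : ℝ, φ t '' A = A) ∧
  ∃ V : Set (Fin 3 → ℝ), IsOpen V ∧ A ⊆ V ∩ cube ∧ V ∩ cube ≠ A ∧
    (∀ t ≥ (0 : ℝ), ∀ z ∈ V ∩ cube, φ t z ∈ V ∩ cube) ∧
    ∀ z ∈ V ∩ cube, omegaLimit3 φ z ⊆ A


def fs (x : ℝ) : ℝ := x * (1 - x) * (1 - 2 * x) * (1 - 2 * x)

lemma fs_eq (x : ℝ) : fs x = x * (1 - x) * (1 - 2 * x) * (1 - 2 * x) := rfl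

lemma fs_nonneg {x : ℝ} (h0 : 0 ≤ x) (h1 : x ≤ 1) : 0 ≤ fs x := by
  rw [show fs x = (x * (1 - x)) * ((1 - 2*x) * (1 - 2*x)) from by rw [fs_eq]; ring]
  exact mul_nonneg (mul_nonneg h0 (by linarith)) (mul_self_nonneg _)

lemma barrier_half {x : ℝ} (h0 : 0 ≤ x) (h1 : x ≤ 1) : |fs x| ≤ |x - 1/2| := by
  rw [abs_of_nonneg (fs_nonneg h0 h1), fs_eq]
  rcases le_total x (1/2) with h | h
  · rw [abs_of_nonpos (by linarith)]
    nlinarith [sq_nonneg (x - 1/2), sq_nonneg x, mul_nonneg h0 (by linarith : (0:ℝ) ≤ 1 - 2*x)]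
  · rw [abs_of_nonneg (by linarith)]
    nlinarith [sq_nonneg (x - 1/2), mul_nonneg (by linarith : (0:ℝ) ≤ 2*x - 1) (by linarith : (0:ℝ) ≤ 1 - x)]

lemma barrier_one {x : ℝ} (h0 : 0 ≤ x) (h1 : x ≤ 1) : |fs x| ≤ |x - 1| := by
  rw [abs_of_nonneg (fs_nonneg h0 h1), abs_of_nonpos (by linarith), fs_eq]
  nlinarith [sq_nonneg (1 - 2*x), mul_nonneg h0 (by linarith : (0:ℝ) ≤ 1 - x)]

lemma prod3_le {a b c a' b' c' : ℝ} (h1 : 0 ≤ a) (h2 : 0 ≤ b) (h3 : 0 ≤ c)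
    (ha : a ≤ a') (hb : b ≤ b') (hc : c ≤ c') : a * b * c ≤ a' * b' * c' := by
  have hab : a * b ≤ a' * b' := mul_le_mul ha hb h2 (h1.trans ha)
  exact mul_le_mul hab hc h3 (mul_nonneg (h1.trans ha) (h2.trans hb))

lemma gron_zero {w g : ℝ → ℝ} {K T : ℝ} (hT : 0 ≤ T)
    (hd : ∀ t ∈ Icc 0 T, HasDerivAt w (g t) t)
    (hb : ∀ t ∈ Icc 0 T, |g t| ≤ K * |w t|)
    (h0 : w 0 = 0) : w T = 0 := by
  have H := norm_le_gronwallBound_of_norm_deriv_right_le (f := w) (f' := g)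
    (δ := 0) (K := K) (ε := 0) (a := 0) (b := T)
    (fun t ht => (hd t ht).continuousAt.continuousWithinAt)
    (fun t ht => (hd t (Ico_subset_Icc_self ht)).hasDerivWithinAt)
    (by simp [h0])
    (fun t ht => by
      have := hb t (Ico_subset_Icc_self ht)
      simpa [Real.norm_eq_abs] using this)
  have h2 := H T (right_mem_Icc.2 hT)
  rw [sub_zero, gronwallBound_ε0_δ0, Real.norm_eq_abs] at h2
  exact abs_eq_zero.1 (le_antisymm h2 (abs_nonneg _))


/-- No solution of `u' = fs u` inside `[0,1]` can reach a zero `β` of `fs`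
(with `|fs x| ≤ |x-β|`) from elsewhere in finite time. -/
lemma no_cross {u : ℝ → ℝ} {β T : ℝ} (hT : 0 ≤ T)
    (hd : ∀ t ∈ Icc 0 T, HasDerivAt u (fs (u t)) t)
    (hmem : ∀ t ∈ Icc 0 T, u t ∈ Icc (0:ℝ) 1)
    (hbar : ∀ x ∈ Icc (0:ℝ) 1, |fs x| ≤ |x - β|)
    (hend : u T = β) : u 0 = β := by
  have hsub : ∀ t ∈ Icc (0:ℝ) T, T - t ∈ Icc (0:ℝ) T := fun t ht =>
    ⟨by linarith [ht.2], by linarith [ht.1]⟩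
  have key := gron_zero (w := fun t => u (T - t) - β)
      (g := fun t => -(fs (u (T - t)))) (K := 1) hT
    (fun t ht => by
      have h1 := (hd _ (hsub t ht)).comp t ((hasDerivAt_id t).const_sub T)
      simpa [mul_comm] using h1.sub_const β)
    (fun t ht => by
      have hm := hmem _ (hsub t ht)
      simpa using hbar _ hm)
    (by simp [hend])
  have h2 : u (T - T) - β = 0 := key
  simp at h2
  linarith

lemma converge {u : ℝ → ℝ} {c β : ℝ}
    (hd : ∀ t, 0 ≤ t → HasDerivAt u (fs (u t)) t)
    (hmem : ∀ t, 0 ≤ t → u t ∈ Icc (0:ℝ) 1)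
    (hu0 : u 0 = c) (hcβ : c < β)
    (hub : ∀ t, 0 ≤ t → u t ≤ β)
    (hlow : ∀ L, c ≤ L → L < β → ∃ m, 0 < m ∧ ∀ x, c ≤ x → x ≤ L → m ≤ fs x) :
    Tendsto u atTop (nhds β) := by
  have hmono : MonotoneOn u (Ici 0) := by
    apply monotoneOn_of_deriv_nonneg (convex_Ici 0)
    · exact fun t ht => (hd t ht).continuousAt.continuousWithinAt
    · intro t ht
      rw [interior_Ici] at ht
      exact ((hd t (le_of_lt ht)).differentiableAt).differentiableWithinAt
    · intro t ht
      rw [interior_Ici] at ht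
      rw [(hd t (le_of_lt ht)).deriv]
      exact fs_nonneg (hmem t (le_of_lt ht)).1 (hmem t (le_of_lt ht)).2
  set w : ℝ → ℝ := fun t => u (max t 0) with hw
  have hwmono : Monotone w := fun s t hst =>
    hmono (le_max_right s 0) (le_max_right t 0) (max_le_max hst le_rfl)
  have hbdd : BddAbove (range w) := ⟨β, by rintro _ ⟨t, rfl⟩; exact hub _ (le_max_right t 0)⟩
  set L := ⨆ t, w t with hL
  have hwt : Tendsto w atTop (nhds L) := tendsto_atTop_ciSup hwmono hbdd
  have hut : Tendsto u atTop (nhds L) := by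
    apply hwt.congr'
    filter_upwards [eventually_ge_atTop (0:ℝ)] with t ht
    simp [hw, max_eq_left ht]
  have hLβ : L ≤ β := ciSup_le fun t => hub _ (le_max_right t 0)
  have hcL : c ≤ L := by
    have := le_ciSup hbdd 0
    simpa [hw, hu0] using this
  have huL : ∀ t, 0 ≤ t → u t ≤ L := fun t ht => by
    have := le_ciSup hbdd t
    simpa [hw, max_eq_left ht] using this
  have hcu : ∀ t, 0 ≤ t → c ≤ u t := fun t ht =>
    hu0 ▸ hmono (self_mem_Ici) ht ht
  rcases eq_or_lt_of_le hLβ with h | h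
  · exact h ▸ hut
  · exfalso
    obtain ⟨m, hm, hmf⟩ := hlow L hcL h
    set T := (L - c + 1) / m with hTdef
    have hT0 : 0 ≤ T := div_nonneg (by linarith) hm.le
    have hg : MonotoneOn (fun t => u t - m * t) (Ici 0) := by
      apply monotoneOn_of_deriv_nonneg (convex_Ici 0)
      · exact fun t ht => ((hd t ht).sub ((hasDerivAt_id t).const_mul m)).continuousAt.continuousWithinAt
      · intro t ht
        rw [interior_Ici] at ht
        exact (((hd t ht.le).sub ((hasDerivAt_id t).const_mul m)).differentiableAt).differentiableWithinAt
      · intro t ht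
        rw [interior_Ici] at ht
        have hder : HasDerivAt (fun t => u t - m * t) (fs (u t) - m * 1) t :=
          (hd t ht.le).sub ((hasDerivAt_id t).const_mul m)
        rw [hder.deriv]
        have := hmf (u t) (hcu t ht.le) (huL t ht.le)
        linarith
    have h1 : u 0 - m * 0 ≤ u T - m * T := hg self_mem_Ici hT0 hT0
    have h2 : m * T = L - c + 1 := by
      have hm' : m ≠ 0 := hm.ne'
      rw [hTdef]; field_simp
    have h3 : u T ≤ L := huL T hT0
    rw [hu0] at h1
    nlinarith


lemma key_tendsto (F : (Fin 3 → ℝ) → (Fin 3 → ℝ))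
    (hF : ∀ (x : Fin 3 → ℝ) (i j k : Fin 3), i ≠ j → i ≠ k → j ≠ k →
      F x i = x i * (1 - x i) * (1 - 2 * x j) * (1 - 2 * x k))
    (φ : ℝ → (Fin 3 → ℝ) → (Fin 3 → ℝ))
    (hcube : ∀ x ∈ cube, ∀ t : ℝ, φ t x ∈ cube)
    (h0 : ∀ x, φ 0 x = x)
    (hderiv : ∀ x ∈ cube, ∀ (t : ℝ) (i : Fin 3),
      HasDerivAt (fun τ => φ τ x i) (F (φ t x) i) t)
    {c β : ℝ} (hc0 : 0 ≤ c) (hc1 : c ≤ 1) (hcβ : c < β)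
    (hbar : ∀ x ∈ Icc (0:ℝ) 1, |fs x| ≤ |x - β|)
    (hlow : ∀ L, c ≤ L → L < β → ∃ m, 0 < m ∧ ∀ x, c ≤ x → x ≤ L → m ≤ fs x) :
    Tendsto (fun n : ℕ => φ (n:ℝ) (fun _ => c)) atTop (nhds (fun _ => β)) := by
  set z : Fin 3 → ℝ := fun _ => c with hzdef
  have hz : z ∈ cube := ⟨fun i => by simpa [hzdef] using hc0, fun i => by simpa [hzdef] using hc1⟩
  have hcoord : ∀ t i, 0 ≤ φ t z i ∧ φ t z i ≤ 1 := fun t i =>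
    ⟨(hcube z hz t).1 i, (hcube z hz t).2 i⟩
  -- diagonal invariance
  have main : ∀ (i k : Fin 3),
      (∀ x : Fin 3 → ℝ, F x i - F x 0 =
        (x i - x 0) * ((1 - 2 * x k) * (1 - (x 0 + x i) + 2 * (x 0 * x i)))) →
      ∀ T, 0 ≤ T → φ T z i = φ T z 0 := by
    intro i k hid T hT
    have hzero := gron_zero (w := fun t => φ t z i - φ t z 0)
        (g := fun t => F (φ t z) i - F (φ t z) 0) (K := 3) hT
      (fun t _ => (hderiv z hz t i).sub (hderiv z hz t 0))
      (fun t _ => by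
        show |F (φ t z) i - F (φ t z) 0| ≤ 3 * |φ t z i - φ t z 0|
        have e := hid (φ t z)
        rw [e, abs_mul]
        have hA : |1 - 2 * φ t z k| ≤ 1 :=
          abs_le.2 ⟨by linarith [(hcoord t k).2], by linarith [(hcoord t k).1]⟩
        have hp0 : 0 ≤ φ t z 0 * φ t z i :=
          mul_nonneg (hcoord t 0).1 (hcoord t i).1
        have hp1 : φ t z 0 * φ t z i ≤ 1 :=
          mul_le_one₀ (hcoord t 0).2 (hcoord t i).1 (hcoord t i).2
        have hB : |1 - (φ t z 0 + φ t z i) + 2 * (φ t z 0 * φ t z i)| ≤ 3 :=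
          abs_le.2 ⟨by nlinarith [(hcoord t 0).2, (hcoord t i).2],
                    by nlinarith [(hcoord t 0).1, (hcoord t i).1]⟩
        have hcof : |(1 - 2 * φ t z k) * (1 - (φ t z 0 + φ t z i) + 2 * (φ t z 0 * φ t z i))| ≤ 3 := by
          rw [abs_mul]
          calc |1 - 2 * φ t z k| * |1 - (φ t z 0 + φ t z i) + 2 * (φ t z 0 * φ t z i)|
              ≤ 1 * 3 := mul_le_mul hA hB (abs_nonneg _) zero_le_one
            _ = 3 := by norm_num
        calc |φ t z i - φ t z 0| * |(1 - 2 * φ t z k) * (1 - (φ t z 0 + φ t z i) + 2 * (φ t z 0 * φ t z i))|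
            ≤ |φ t z i - φ t z 0| * 3 := mul_le_mul_of_nonneg_left hcof (abs_nonneg _)
          _ = 3 * |φ t z i - φ t z 0| := by ring)
      (by simp [h0, hzdef])
    have : φ T z i - φ T z 0 = 0 := hzero
    linarith
  have hd1 : ∀ T, 0 ≤ T → φ T z 1 = φ T z 0 := by
    apply main 1 2
    intro x
    rw [hF x 1 0 2 (by decide) (by decide) (by decide),
        hF x 0 1 2 (by decide) (by decide) (by decide)]
    ring
  have hd2 : ∀ T, 0 ≤ T → φ T z 2 = φ T z 0 := by
    apply main 2 1
    intro x
    rw [hF x 2 0 1 (by decide) (by decide) (by decide),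
        hF x 0 2 1 (by decide) (by decide) (by decide)]
    ring
  set u : ℝ → ℝ := fun t => φ t z 0 with hudef
  have hud : ∀ t, 0 ≤ t → HasDerivAt u (fs (u t)) t := by
    intro t ht
    have h := hderiv z hz t 0
    have e : F (φ t z) 0 = fs (u t) := by
      rw [hF (φ t z) 0 1 2 (by decide) (by decide) (by decide), hd1 t ht, hd2 t ht, fs_eq]
    rwa [e] at h
  have humem : ∀ t, 0 ≤ t → u t ∈ Icc (0:ℝ) 1 := fun t _ => ⟨(hcoord t 0).1, (hcoord t 0).2⟩
  have hu0 : u 0 = c := by simp [hudef, h0, hzdef]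
  have hub : ∀ t, 0 ≤ t → u t ≤ β := by
    intro T hT
    by_contra hlt
    push_neg at hlt
    have hcont : ContinuousOn u (Icc 0 T) := fun s hs =>
      (hud s hs.1).continuousAt.continuousWithinAt
    have hβmem : β ∈ Icc (u 0) (u T) := ⟨by rw [hu0]; exact hcβ.le, hlt.le⟩
    obtain ⟨T', hT', hval⟩ := intermediate_value_Icc hT hcont hβmem
    have := no_cross hT'.1 (fun s hs => hud s hs.1) (fun s hs => humem s hs.1) hbar hval
    rw [hu0] at this
    exact absurd this (ne_of_lt hcβ)
  have conv : Tendsto u atTop (nhds β) := converge hud humem hu0 hcβ hub hlow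
  have hcast : Tendsto (fun n : ℕ => u (n:ℝ)) atTop (nhds β) :=
    conv.comp tendsto_natCast_atTop_atTop
  rw [tendsto_pi_nhds]
  intro i
  have heq : ∀ n : ℕ, φ (n:ℝ) z i = u (n:ℝ) := by
    intro n
    fin_cases i
    · rfl
    · exact hd1 _ (Nat.cast_nonneg n)
    · exact hd2 _ (Nat.cast_nonneg n)
  exact hcast.congr fun n => (heq n).symm


/-- For (any flow of) the replicator field of the odd-sum 2×2×2 game,
every attracting set containing `(0,0,0)` also contains `(1/2,1/2,1/2)` and `(1,1,1)`. -/
theorem statement5 (F : (Fin 3 → ℝ) → (Fin 3 → ℝ))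
    (hF : ∀ (x : Fin 3 → ℝ) (i j k : Fin 3), i ≠ j → i ≠ k → j ≠ k →
      F x i = x i * (1 - x i) * (1 - 2 * x j) * (1 - 2 * x k))
    (φ : ℝ → (Fin 3 → ℝ) → (Fin 3 → ℝ))
    (hcube : ∀ x ∈ cube, ∀ t : ℝ, φ t x ∈ cube)
    (h0 : ∀ x, φ 0 x = x)
    (hgrp : ∀ s t : ℝ, ∀ x, φ (s + t) x = φ s (φ t x))
    (hderiv : ∀ x ∈ cube, ∀ (t : ℝ) (i : Fin 3),
      HasDerivAt (fun τ => φ τ x i) (F (φ t x) i) t)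
    (A : Set (Fin 3 → ℝ)) (hA : AttractingSet3 φ A)
    (h000 : (fun _ => (0 : ℝ)) ∈ A) :
    (fun _ => (1 / 2 : ℝ)) ∈ A ∧ (fun _ => (1 : ℝ)) ∈ A := by
  obtain ⟨hAsub, hAcomp, hAinv, V, hVopen, hAV, hne, hfwd, hω⟩ := hA
  have grow : ∀ a β : ℝ, 0 ≤ a → a < β → β ≤ 1 → (fun _ => a) ∈ A →
      (∀ x ∈ Icc (0:ℝ) 1, |fs x| ≤ |x - β|) →
      (∀ c, a < c → c < β → ∀ L, c ≤ L → L < β →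
        ∃ m, 0 < m ∧ ∀ x, c ≤ x → x ≤ L → m ≤ fs x) →
      (fun _ => β) ∈ A := by
    intro a β ha0 haβ hβ1 hmemA hbar hlow'
    have haV : (fun _ => a) ∈ V := (hAV hmemA).1
    obtain ⟨ε, hε, hball⟩ := Metric.isOpen_iff.1 hVopen _ haV
    set δ := min (ε/2) ((β - a)/2) with hδdef
    have hδ0 : 0 < δ := lt_min (by linarith) (by linarith)
    set c := a + δ with hcdef
    have hac : a < c := by simp [hcdef]; linarith
    have hcβ : c < β := by
      have : δ ≤ (β - a)/2 := min_le_right _ _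
      simp only [hcdef]; linarith
    have hc0 : 0 ≤ c := by linarith
    have hc1 : c ≤ 1 := by linarith
    set z : Fin 3 → ℝ := fun _ => c with hzdef
    have hzV : z ∈ V := by
      apply hball
      rw [Metric.mem_ball, dist_pi_lt_iff hε]
      intro i
      have : δ ≤ ε/2 := min_le_left _ _
      simp only [hzdef, Real.dist_eq, hcdef]
      rw [abs_of_nonneg (by linarith)]
      linarith
    have hzcube : z ∈ cube := ⟨fun i => by simpa [hzdef] using hc0,
                               fun i => by simpa [hzdef] using hc1⟩
    have hten := key_tendsto F hF φ hcube h0 hderiv hc0 hc1 hcβ hbar (hlow' c hac hcβ)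
    have hmem : (fun _ => β) ∈ omegaLimit3 φ z :=
      ⟨fun n => (n : ℝ), tendsto_natCast_atTop_atTop, hten⟩
    exact hω z ⟨hzV, hzcube⟩ hmem
  have hhalf : (fun _ => (1/2 : ℝ)) ∈ A := by
    apply grow 0 (1/2) le_rfl (by norm_num) (by norm_num) h000
      (fun x hx => barrier_half hx.1 hx.2)
    intro c hc0 hc12 L hcL hL12
    refine ⟨c * (1 - L) * ((1 - 2*L) * (1 - 2*L)), ?_, ?_⟩
    · exact mul_pos (mul_pos hc0 (by linarith)) (mul_pos (by linarith) (by linarith))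
    · intro x hx1 hx2
      rw [show fs x = x * (1 - x) * ((1 - 2*x) * (1 - 2*x)) from by rw [fs_eq]; ring]
      exact prod3_le hc0.le (by linarith) (mul_self_nonneg _) hx1 (by linarith)
        (mul_self_le_mul_self (by linarith) (by linarith))
  refine ⟨hhalf, ?_⟩
  apply grow (1/2) 1 (by norm_num) (by norm_num) le_rfl hhalf
    (fun x hx => barrier_one hx.1 hx.2)
  intro c hc12 hc1 L hcL hL1
  refine ⟨c * (1 - L) * ((2*c - 1) * (2*c - 1)), ?_, ?_⟩
  · exact mul_pos (mul_pos (by linarith) (by linarith)) (mul_pos (by linarith) (by linarith))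
  · intro x hx1 hx2
    rw [show fs x = x * (1 - x) * ((2*x - 1) * (2*x - 1)) from by rw [fs_eq]; ring]
    exact prod3_le (by linarith) (by linarith) (mul_self_nonneg _) hx1 (by linarith)
      (mul_self_le_mul_self (by linarith) (by linarith))
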